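/- Let A be an associative unital ℚ(q)-algebra and let x, w ∈ A satisfy w x = q²·x w. Then for every m ∈ ℕ and every t ∈ ℤ: (x + (q − q^{−1})² w ; t choose m) = Σ_{r=0}^{m} q^{r(t−m)} (q − q^{−1})^r · {x; t choose m, r} · w^{(r)}. (Lemma 1.6, formula (c-1).) -/

import Mathlib

noncomputable section

open Finset

/-- The field `ℚ(q)` of rational functions over `ℚ`. -/
abbrev 𝕂 : Type := RatFunc ℚ

/-- The indeterminate `q`. -/
def q : 𝕂 := RatFunc.X

/-- `(n)_q = 1 + q + ⋯ + q^(n-1)`. -/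
def qNum (n : ℕ) : 𝕂 := ∑ i ∈ range n, q ^ i

/-- `(n)_q! = ∏_{r=1}^n (r)_q`. -/
def qNumFac (n : ℕ) : 𝕂 := ∏ r ∈ range n, qNum (r + 1)

/-- `(n choose s)_q = (n)_q! / ((s)_q! (n-s)_q!)`. -/
def qNumBinom (n s : ℕ) : 𝕂 := qNumFac n / (qNumFac s * qNumFac (n - s))

/-- `[n]_q = (q^n - q^(-n))/(q - q⁻¹)`. -/
def qInt (n : ℕ) : 𝕂 := (q ^ n - q⁻¹ ^ n) / (q - q⁻¹)

/-- `[n]_q! = ∏_{r=1}^n [r]_q`. -/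
def qIntFac (n : ℕ) : 𝕂 := ∏ r ∈ range n, qInt (r + 1)

/-- `[n choose s]_q = [n]_q! / ([s]_q! [n-s]_q!)`. -/
def qIntBinom (n s : ℕ) : 𝕂 := qIntFac n / (qIntFac s * qIntFac (n - s))

variable {A : Type*} [Ring A] [Algebra 𝕂 A]

/-- The `q`-divided power `X^(n) = X^n / [n]_q!`. -/
def qDiv (X : A) (n : ℕ) : A := (qIntFac n)⁻¹ • X ^ n

/-- The `q`-binomial coefficient `(X ; c choose n) = ∏_{s=1}^n (q^(c+1-s) X - 1)/(q^s - 1)`. -/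
def qBin (X : A) (c : ℤ) (n : ℕ) : A :=
  (∏ s ∈ range n, (q ^ (s + 1) - 1))⁻¹ •
    ((List.range n).map (fun i => (q ^ (c - (i : ℤ)) : 𝕂) • X - 1)).prod

/-- `{X ; c choose n , r} = ∑_{s=0}^r q^(binom(s+1,2)) (r choose s)_q (X ; c+s choose n-r)`. -/
def qBrace (X : A) (c : ℤ) (n r : ℕ) : A :=
  ∑ s ∈ range (r + 1),
    (q ^ ((s + 1).choose 2) * qNumBinom r s : 𝕂) • qBin X (c + s) (n - r)

section ScalarBasics
open Polynomial

lemma q_eq : q = algebraMap (Polynomial ℚ) 𝕂 Polynomial.X := (RatFunc.algebraMap_X).symm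

lemma q_ne_zero : q ≠ 0 := RatFunc.X_ne_zero

lemma q_pow_sub_one_ne (n : ℕ) : q ^ (n + 1) - (1 : 𝕂) ≠ 0 := by
  rw [q_eq, ← map_pow, ← map_one (algebraMap (Polynomial ℚ) 𝕂), ← map_sub]
  intro h
  have h0 := RatFunc.algebraMap_injective (K := ℚ) (h.trans (map_zero _).symm)
  have := congrArg (Polynomial.eval 0) h0
  simp [zero_pow] at this

lemma qNum_mul_q_sub_one (n : ℕ) : qNum n * (q - 1) = q ^ n - 1 := by
  simpa [qNum] using geom_sum_mul q n

lemma qNum_succ_ne (n : ℕ) : qNum (n + 1) ≠ 0 := by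
  intro h
  have := qNum_mul_q_sub_one (n + 1)
  rw [h, zero_mul] at this
  exact q_pow_sub_one_ne n this.symm

lemma qNumFac_ne (n : ℕ) : qNumFac n ≠ 0 := by
  unfold qNumFac
  exact Finset.prod_ne_zero_iff.2 fun i _ => qNum_succ_ne i

lemma qNumFac_succ (n : ℕ) : qNumFac (n + 1) = qNumFac n * qNum (n + 1) :=
  Finset.prod_range_succ _ n

lemma q_sq_sub_one_ne : q ^ 2 - (1 : 𝕂) ≠ 0 := q_pow_sub_one_ne 1

lemma q_sub_qinv_ne : q - q⁻¹ ≠ 0 := by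
  intro h
  apply q_sq_sub_one_ne
  have : (q - q⁻¹) * q = q ^ 2 - 1 := by
    rw [sub_mul, inv_mul_cancel₀ q_ne_zero, sq]
  rw [h, zero_mul] at this
  exact this.symm

lemma q_pow_sub_q_inv_pow_ne (n : ℕ) : q ^ (n + 1) - q⁻¹ ^ (n + 1) ≠ 0 := by
  intro h
  apply q_pow_sub_one_ne (2 * (n + 1) - 1)
  have h2 : (q ^ (n + 1) - q⁻¹ ^ (n + 1)) * q ^ (n + 1) = q ^ (2 * (n + 1)) - 1 := by
    rw [sub_mul, ← pow_add, inv_pow, inv_mul_cancel₀ (pow_ne_zero _ q_ne_zero), two_mul]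
  have : 2 * (n + 1) - 1 + 1 = 2 * (n + 1) := by omega
  rw [this, ← h2, h, zero_mul]

lemma qInt_succ_ne (n : ℕ) : qInt (n + 1) ≠ 0 := by
  unfold qInt
  exact div_ne_zero (q_pow_sub_q_inv_pow_ne n) q_sub_qinv_ne

lemma qInt_mul (n : ℕ) : (q - q⁻¹) * qInt (n + 1) = q ^ (n + 1) - q⁻¹ ^ (n + 1) := by
  rw [qInt, mul_div_cancel₀ _ q_sub_qinv_ne]

lemma qIntFac_ne (n : ℕ) : qIntFac n ≠ 0 := by
  unfold qIntFac
  exact Finset.prod_ne_zero_iff.2 fun i _ => qInt_succ_ne i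

lemma qIntFac_succ (n : ℕ) : qIntFac (n + 1) = qIntFac n * qInt (n + 1) :=
  Finset.prod_range_succ _ n

lemma qNum_add (a b : ℕ) : qNum (a + b) = qNum a + q ^ a * qNum b := by
  unfold qNum
  rw [Finset.sum_range_add, Finset.mul_sum]
  congr 1
  exact Finset.sum_congr rfl fun i _ => (pow_add q a i)

lemma qNumFac_zero : qNumFac 0 = 1 := rfl

lemma qNumBinom_zero (n : ℕ) : qNumBinom n 0 = 1 := by
  unfold qNumBinom
  rw [qNumFac_zero, Nat.sub_zero, one_mul, div_self (qNumFac_ne n)]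

lemma qNumBinom_self (n : ℕ) : qNumBinom n n = 1 := by
  unfold qNumBinom
  rw [Nat.sub_self, qNumFac_zero, mul_one, div_self (qNumFac_ne n)]

lemma qNumBinom_pascal {s r : ℕ} (h : s < r) :
    qNumBinom (r + 1) (s + 1) = qNumBinom r (s + 1) + q ^ (r - s) * qNumBinom r s := by
  unfold qNumBinom
  have h1 : r + 1 - (s + 1) = r - s := by omega
  have h2 : r - s = (r - s - 1) + 1 := by omega
  have h3 : r - (s + 1) = r - s - 1 := by omega
  have key : qNum (r + 1) = qNum (r - s) + q ^ (r - s) * qNum (s + 1) := by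
    have := qNum_add (r - s) (s + 1)
    rwa [show r - s + (s + 1) = r + 1 by omega] at this
  rw [h1, h3, qNumFac_succ r, h2, qNumFac_succ (r - s - 1), qNumFac_succ s, ← h2]
  have e1 : qNumFac s ≠ 0 := qNumFac_ne s
  have e2 : qNumFac (r - s - 1) ≠ 0 := qNumFac_ne _
  have e3 : qNum (s + 1) ≠ 0 := qNum_succ_ne s
  have e4 : qNum (r - s) ≠ 0 := by rw [h2]; exact qNum_succ_ne _
  field_simp
  rw [key]
  ring

end ScalarBasics
section BinBasics

variable {A : Type*} [Ring A] [Algebra 𝕂 A]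

lemma prodD_ne (n : ℕ) : (∏ s ∈ range n, (q ^ (s + 1) - 1)) ≠ 0 :=
  Finset.prod_ne_zero_iff.2 fun i _ => q_pow_sub_one_ne i

lemma qBin_eq (x : A) (c : ℤ) (n : ℕ) :
    qBin x c n = (∏ s ∈ range n, (q ^ (s + 1) - 1))⁻¹ •
      ((List.range n).map (fun i : ℕ => (q ^ (c - (i : ℤ)) : 𝕂) • x - 1)).prod := by
  unfold qBin
  congr 2
  have hl : ∀ l : List ℕ, (do let a ← l; pure ((a : ℤ))) = l.map (fun a : ℕ => (a : ℤ)) := by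
    intro l
    induction l with
    | nil => rfl
    | cons h t ih => simpa using ih
  rw [hl, List.map_map]
  rfl

lemma qBin_zero (x : A) (c : ℤ) : qBin x c 0 = 1 := by
  simp [qBin_eq]

lemma listprod_succ {B : Type*} [Monoid B] (f : ℕ → B) (n : ℕ) :
    ((List.range (n + 1)).map f).prod = ((List.range n).map f).prod * f n := by
  rw [List.range_succ, List.map_append, List.prod_append, List.map_singleton,
    List.prod_singleton]

lemma listprod_succ' {B : Type*} [Monoid B] (f : ℕ → B) (n : ℕ) :
    ((List.range (n + 1)).map f).prod = f 0 * ((List.range n).map (f ∘ Nat.succ)).prod := by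
  rw [List.range_succ_eq_map, List.map_cons, List.prod_cons, List.map_map]

lemma inv_smul_step (e a : 𝕂) (he : e ≠ 0) (z : A) : e • (a * e)⁻¹ • z = a⁻¹ • z := by
  rw [mul_inv, smul_smul, mul_comm a⁻¹, ← mul_assoc, mul_inv_cancel₀ he, one_mul]

lemma qBin_succ_right (x : A) (c : ℤ) (n : ℕ) :
    (q ^ (n + 1) - 1) • qBin x c (n + 1) =
      qBin x c n * ((q ^ (c - (n : ℤ)) : 𝕂) • x - 1) := by
  rw [qBin_eq x c (n + 1), qBin_eq x c n, listprod_succ, Finset.prod_range_succ,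
    inv_smul_step _ _ (q_pow_sub_one_ne n), smul_mul_assoc]

lemma qBin_succ_left (x : A) (c : ℤ) (n : ℕ) :
    (q ^ (n + 1) - 1) • qBin x (c + 1) (n + 1) =
      ((q ^ (c + 1) : 𝕂) • x - 1) * qBin x c n := by
  rw [qBin_eq x (c + 1) (n + 1), qBin_eq x c n, listprod_succ', Finset.prod_range_succ,
    inv_smul_step _ _ (q_pow_sub_one_ne n)]
  have h1 : ((fun i : ℕ => (q ^ (c + 1 - (i : ℤ)) : 𝕂) • x - 1) ∘ Nat.succ) =
      fun i : ℕ => (q ^ (c - (i : ℤ)) : 𝕂) • x - 1 := by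
    funext i
    simp only [Function.comp_apply, Nat.succ_eq_add_one]
    congr 2
    push_cast
    ring
  have h2 : (c + 1 - ((0 : ℕ) : ℤ)) = c + 1 := by push_cast; ring
  rw [h1, h2, mul_smul_comm]

end BinBasics

section HqBasics

variable {A : Type*} [Ring A] [Algebra 𝕂 A]

/-- `Hq x c d r = ∑_s a(r,s) • qBin x (c+s) d`. -/
def Hq (x : A) (c : ℤ) (d r : ℕ) : A :=
  ∑ s ∈ range (r + 1), (q ^ ((s + 1).choose 2) * qNumBinom r s : 𝕂) • qBin x (c + s) d

lemma qBrace_eq_Hq (x : A) (c : ℤ) (n r : ℕ) : qBrace x c n r = Hq x c (n - r) r := rfl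

lemma Hq_zero (x : A) (c : ℤ) (d : ℕ) : Hq x c d 0 = qBin x c d := by
  simp [Hq, qNumBinom_zero]

lemma choose2_succ (n : ℕ) : (n + 2).choose 2 = (n + 1).choose 2 + (n + 1) := by
  have h : (n + 2).choose 2 = (n + 1).choose 1 + (n + 1).choose 2 :=
    Nat.choose_succ_succ' (n + 1) 1
  rw [Nat.choose_one_right] at h
  omega

lemma a_coef_top (r : ℕ) :
    (q ^ ((r + 2).choose 2) * qNumBinom (r + 1) (r + 1) : 𝕂) =
      q ^ (r + 1) * (q ^ ((r + 1).choose 2) * qNumBinom r r) := by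
  rw [qNumBinom_self, qNumBinom_self, mul_one, mul_one, ← pow_add]
  congr 1
  have := choose2_succ r
  omega

lemma a_coef_pascal {i r : ℕ} (h : i < r) :
    (q ^ ((i + 2).choose 2) * qNumBinom (r + 1) (i + 1) : 𝕂) =
      q ^ ((i + 2).choose 2) * qNumBinom r (i + 1)
        + q ^ (r + 1) * (q ^ ((i + 1).choose 2) * qNumBinom r i) := by
  rw [qNumBinom_pascal h, mul_add]
  congr 1
  rw [← mul_assoc, ← mul_assoc, ← pow_add, ← pow_add]
  congr 2
  have := choose2_succ i
  omega

lemma a_rec {M : Type*} [AddCommMonoid M] [Module 𝕂 M] (v : ℕ → M) (r : ℕ) :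
    ∑ s ∈ range (r + 2), (q ^ ((s + 1).choose 2) * qNumBinom (r + 1) s : 𝕂) • v s =
      ∑ s ∈ range (r + 1), (q ^ ((s + 1).choose 2) * qNumBinom r s : 𝕂) • v s
        + ∑ s ∈ range (r + 1),
            (q ^ (r + 1) * (q ^ ((s + 1).choose 2) * qNumBinom r s) : 𝕂) • v (s + 1) := by
  rw [Finset.sum_range_succ' (fun s => (q ^ ((s + 1).choose 2) * qNumBinom (r + 1) s : 𝕂) • v s) (r + 1),
    Finset.sum_range_succ' (fun s => (q ^ ((s + 1).choose 2) * qNumBinom r s : 𝕂) • v s) r,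
    Finset.sum_range_succ (fun i => (q ^ ((i + 1 + 1).choose 2) * qNumBinom (r + 1) (i + 1) : 𝕂) • v (i + 1)) r,
    Finset.sum_range_succ (fun s => (q ^ (r + 1) * (q ^ ((s + 1).choose 2) * qNumBinom r s) : 𝕂) • v (s + 1)) r]
  have h0 : (q ^ ((0 + 1).choose 2) * qNumBinom (r + 1) 0 : 𝕂) = q ^ ((0 + 1).choose 2) * qNumBinom r 0 := by
    rw [qNumBinom_zero, qNumBinom_zero]
  have htop : (q ^ ((r + 1 + 1).choose 2) * qNumBinom (r + 1) (r + 1) : 𝕂) • v (r + 1) =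
      (q ^ (r + 1) * (q ^ ((r + 1).choose 2) * qNumBinom r r) : 𝕂) • v (r + 1) := by
    rw [show r + 1 + 1 = r + 2 from rfl, a_coef_top]
  have hmid : ∑ i ∈ range r, (q ^ ((i + 1 + 1).choose 2) * qNumBinom (r + 1) (i + 1) : 𝕂) • v (i + 1) =
      ∑ i ∈ range r, ((q ^ ((i + 1 + 1).choose 2) * qNumBinom r (i + 1) : 𝕂) • v (i + 1)
        + (q ^ (r + 1) * (q ^ ((i + 1).choose 2) * qNumBinom r i) : 𝕂) • v (i + 1)) := by
    refine Finset.sum_congr rfl fun i hi => ?_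
    rw [← add_smul, show i + 1 + 1 = i + 2 from rfl, a_coef_pascal (Finset.mem_range.1 hi)]
  rw [h0, htop, hmid, Finset.sum_add_distrib]
  abel

lemma Hq_succ (x : A) (c : ℤ) (d r : ℕ) :
    Hq x c d (r + 1) = Hq x c d r + (q ^ (r + 1) : 𝕂) • Hq x (c + 1) d r := by
  unfold Hq
  rw [a_rec (fun s => qBin x (c + s) d) r, Finset.smul_sum]
  congr 1
  refine Finset.sum_congr rfl fun s _ => ?_
  rw [smul_smul]
  congr 2
  push_cast
  ring

end HqBasics
section PolyWorld
open Polynomial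

lemma smul_cancel {A : Type*} [AddCommMonoid A] [Module 𝕂 A] {a : 𝕂} (ha : a ≠ 0)
    {z₁ z₂ : A} (h : a • z₁ = a • z₂) : z₁ = z₂ := by
  have h2 := congrArg (fun y => a⁻¹ • y) h
  simpa [smul_smul, inv_mul_cancel₀ ha] using h2

lemma qh1 (t : ℤ) (d : ℕ) : (q : 𝕂) ^ (d : ℕ) * q ^ (t - (d : ℤ)) = q ^ t := by
  rw [← zpow_natCast q d, ← zpow_add₀ q_ne_zero]
  congr 1
  ring

lemma qh2 (t : ℤ) (d : ℕ) : (q : 𝕂) ^ (d : ℕ) * q ^ (t + 1 - (d : ℤ)) = q * q ^ t := by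
  rw [← zpow_natCast q d, ← zpow_add₀ q_ne_zero,
    show (d : ℤ) + (t + 1 - (d : ℤ)) = t + 1 by ring, zpow_add_one₀ q_ne_zero, mul_comm]

lemma qh3 (t : ℤ) : (q : 𝕂) ^ (t + 1) = q * q ^ t := by
  rw [zpow_add_one₀ q_ne_zero, mul_comm]

lemma qBin_pascal (c : ℤ) (d : ℕ) :
    qBin (X : Polynomial 𝕂) (c + 1) (d + 1) =
      qBin X c (d + 1) + (q ^ (c - (d : ℤ)) : 𝕂) • (X * qBin X c d) := by
  refine smul_cancel (q_pow_sub_one_ne d) ?_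
  rw [smul_add, qBin_succ_left, qBin_succ_right, smul_smul]
  have hq : (q : 𝕂) ^ (c + 1) = q ^ (c - (d : ℤ)) * q ^ (d + 1) := by
    rw [← zpow_natCast q (d + 1), ← zpow_add₀ q_ne_zero]
    congr 1
    push_cast
    ring
  rw [hq]
  simp only [Polynomial.smul_eq_C_mul, map_mul, map_sub, map_one, map_pow]
  ring

lemma ddag (t : ℤ) (d r : ℕ) :
    (q ^ d : 𝕂) • Hq (X : Polynomial 𝕂) (t + 2) (d + 1) r
      - (q ^ d : 𝕂) • Hq X t (d + 1) r
      = (q ^ t : 𝕂) • (X * Hq X t d (r + 1)) := by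
  induction r generalizing t with
  | zero =>
    rw [Hq_zero, Hq_zero, Hq_succ, Hq_zero, Hq_zero,
      show (t : ℤ) + 2 = t + 1 + 1 by ring, qBin_pascal (t + 1) d, qBin_pascal t d]
    have hc1 := congrArg (Polynomial.C : 𝕂 →+* Polynomial 𝕂) (qh1 t d)
    have hc2 := congrArg (Polynomial.C : 𝕂 →+* Polynomial 𝕂) (qh2 t d)
    simp only [Polynomial.smul_eq_C_mul, map_mul, map_sub, map_one, map_pow, pow_one] at hc1 hc2 ⊢
    linear_combination (X * qBin (X : Polynomial 𝕂) t d) * hc1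
      + (X * qBin (X : Polynomial 𝕂) (t + 1) d) * hc2
  | succ r ih =>
    have I1 := ih t
    have I2 := ih (t + 1)
    rw [show (t : ℤ) + 1 + 2 = t + 3 by ring] at I2
    rw [Hq_succ X (t + 2) (d + 1) r, Hq_succ X t (d + 1) r, Hq_succ X t d (r + 1),
      show (t : ℤ) + 2 + 1 = t + 3 by ring]
    have hc := congrArg (Polynomial.C : 𝕂 →+* Polynomial 𝕂) (qh3 t)
    simp only [Polynomial.smul_eq_C_mul, map_mul, map_sub, map_one, map_pow, pow_one]
      at I1 I2 hc ⊢
    rw [hc] at I2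
    linear_combination I1 + (Polynomial.C q) ^ (r + 1) * I2

lemma star2 (t : ℤ) (d r : ℕ) :
    ((q : 𝕂) ^ d * (q ^ (d + r + 1) - 1)) • Hq (X : Polynomial 𝕂) t (d + 1) r =
      ((q ^ (t + 2 * (r : ℤ)) : 𝕂) • (X : Polynomial 𝕂) - (q ^ (d + r) : 𝕂) • 1) * Hq X t d r
        + ((q : 𝕂) ^ d * (q ^ (2 * r) - 1)) • Hq X t (d + 1) (r - 1) := by
  induction r generalizing t with
  | zero =>
    rw [show t + 2 * ((0 : ℕ) : ℤ) = t by push_cast; ring]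
    simp only [Nat.mul_zero, pow_zero, sub_self, mul_zero, zero_smul, add_zero, Nat.add_zero,
      Hq_zero, Nat.zero_sub]
    have R1 := qBin_succ_right (X : Polynomial 𝕂) t d
    have hc := congrArg (Polynomial.C : 𝕂 →+* Polynomial 𝕂) (qh1 t d)
    simp only [Polynomial.smul_eq_C_mul, map_mul, map_sub, map_one, map_pow] at R1 hc ⊢
    linear_combination (Polynomial.C q) ^ d * R1
      + (X * qBin (X : Polynomial 𝕂) t d) * hc
  | succ r ih =>
    cases r with
    | zero =>
      have e0 : (q : 𝕂) ^ (t + 2 * (((0 + 1 : ℕ)) : ℤ)) = q ^ t * q ^ (2 : ℕ) := by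
        have h : t + 2 * (((0 + 1 : ℕ)) : ℤ) = t + ((2 : ℕ) : ℤ) := by push_cast; ring
        rw [h, zpow_add₀ q_ne_zero, zpow_natCast]
      rw [e0, Hq_succ X t (d + 1) 0, Hq_succ X t d 0]
      simp only [Hq_zero, pow_one, Nat.add_sub_cancel]
      have R1 := qBin_succ_right (X : Polynomial 𝕂) t d
      have R2 := qBin_succ_right (X : Polynomial 𝕂) (t + 1) d
      have Pd := qBin_pascal t d
      have hc1 := congrArg (Polynomial.C : 𝕂 →+* Polynomial 𝕂) (qh1 t d)
      have hc2 := congrArg (Polynomial.C : 𝕂 →+* Polynomial 𝕂) (qh2 t d)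
      simp only [Polynomial.smul_eq_C_mul, map_mul, map_sub, map_one, map_pow, pow_one]
        at R1 R2 Pd hc1 hc2 ⊢
      have R1c : (Polynomial.C q) ^ d * ((Polynomial.C q) ^ (d + 1) - 1) * qBin (X : Polynomial 𝕂) t (d + 1)
          = qBin (X : Polynomial 𝕂) t d * (Polynomial.C (q ^ t) * X - (Polynomial.C q) ^ d) := by
        linear_combination (Polynomial.C q) ^ d * R1 + qBin (X : Polynomial 𝕂) t d * X * hc1
      have R2c : (Polynomial.C q) ^ d * ((Polynomial.C q) ^ (d + 1) - 1) * qBin (X : Polynomial 𝕂) (t + 1) (d + 1)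
          = qBin (X : Polynomial 𝕂) (t + 1) d * (Polynomial.C q * Polynomial.C (q ^ t) * X - (Polynomial.C q) ^ d) := by
        linear_combination (Polynomial.C q) ^ d * R2 + qBin (X : Polynomial 𝕂) (t + 1) d * X * hc2
      have Pdc : (Polynomial.C q) ^ d * qBin (X : Polynomial 𝕂) (t + 1) (d + 1)
          = (Polynomial.C q) ^ d * qBin (X : Polynomial 𝕂) t (d + 1)
            + Polynomial.C (q ^ t) * (X * qBin (X : Polynomial 𝕂) t d) := by
        linear_combination (Polynomial.C q) ^ d * Pd + X * qBin (X : Polynomial 𝕂) t d * hc1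
      linear_combination Polynomial.C q * R1c + (Polynomial.C q) ^ 2 * R2c
        + ((Polynomial.C q) ^ 2 - Polynomial.C q) * Pdc
    | succ r =>
      have I1 := ih t
      have I2 := ih (t + 1)
      have D0 := ddag t d r
      have E3 := Hq_succ (X : Polynomial 𝕂) t (d + 1) r
      have E4 := Hq_succ (X : Polynomial 𝕂) (t + 1) (d + 1) r
      have G1 := Hq_succ (X : Polynomial 𝕂) t (d + 1) (r + 1)
      have G2 := Hq_succ (X : Polynomial 𝕂) t d (r + 1)
      rw [show (t : ℤ) + 1 + 1 = t + 2 by ring] at E4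
      rw [show (r : ℕ) + 1 - 1 = r from rfl] at I1 I2
      have e0 : (q : 𝕂) ^ (t + 2 * (((r + 1 + 1) : ℕ) : ℤ)) = q ^ t * q ^ (2 * r + 4) := by
        have h : t + 2 * (((r + 1 + 1) : ℕ) : ℤ) = t + ((2 * r + 4 : ℕ) : ℤ) := by push_cast; ring
        rw [h, zpow_add₀ q_ne_zero, zpow_natCast]
      have e1 : (q : 𝕂) ^ (t + 2 * (((r + 1) : ℕ) : ℤ)) = q ^ t * q ^ (2 * r + 2) := by
        have h : t + 2 * (((r + 1) : ℕ) : ℤ) = t + ((2 * r + 2 : ℕ) : ℤ) := by push_cast; ring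
        rw [h, zpow_add₀ q_ne_zero, zpow_natCast]
      have e2 : (q : 𝕂) ^ (t + 1 + 2 * (((r + 1) : ℕ) : ℤ)) = q ^ t * q ^ (2 * r + 3) := by
        have h : t + 1 + 2 * (((r + 1) : ℕ) : ℤ) = t + ((2 * r + 3 : ℕ) : ℤ) := by push_cast; ring
        rw [h, zpow_add₀ q_ne_zero, zpow_natCast]
      rw [e1] at I1
      rw [e2] at I2
      rw [e0, show (r : ℕ) + 1 + 1 - 1 = r + 1 from rfl]
      simp only [Polynomial.smul_eq_C_mul, map_mul, map_sub, map_one, map_pow, pow_one]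
        at I1 I2 D0 E3 E4 G1 G2 ⊢
      linear_combination Polynomial.C q * I1 + (Polynomial.C q) ^ (r + 3) * I2
        + (Polynomial.C q) ^ (2 * r + 3) * (Polynomial.C q - 1) * D0
        - (Polynomial.C q) ^ (d + 1) * ((Polynomial.C q) ^ (2 * r + 3) - 1) * E3
        + (Polynomial.C q) ^ (d + r + 2) * (Polynomial.C q - 1) * E4
        + (Polynomial.C q) ^ d * ((Polynomial.C q) ^ (d + r + 3) - 1) * G1
        + ((Polynomial.C q) ^ (d + r + 2) - Polynomial.C (q ^ t) * (Polynomial.C q) ^ (2 * r + 4) * X) * G2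


end PolyWorld
section Transport
open Polynomial

variable {A : Type*} [Ring A] [Algebra 𝕂 A]

lemma aeval_qBin (x : A) (c : ℤ) (n : ℕ) :
    Polynomial.aeval x (qBin (X : Polynomial 𝕂) c n) = qBin x c n := by
  rw [qBin_eq, qBin_eq, map_smul]
  congr 1
  rw [map_list_prod, List.map_map]
  have h : (⇑(Polynomial.aeval x) ∘ fun i : ℕ => (q ^ (c - (i : ℤ)) : 𝕂) • (X : Polynomial 𝕂) - 1)
      = fun i : ℕ => (q ^ (c - (i : ℤ)) : 𝕂) • x - 1 := by
    funext i
    simp only [Function.comp_apply, map_sub, map_smul, Polynomial.aeval_X, map_one]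
  rw [h]

lemma aeval_Hq (x : A) (c : ℤ) (d r : ℕ) :
    Polynomial.aeval x (Hq (X : Polynomial 𝕂) c d r) = Hq x c d r := by
  unfold Hq
  rw [map_sum]
  exact Finset.sum_congr rfl fun s _ => by rw [map_smul, aeval_qBin]

lemma x_commute_Hq (x : A) (c : ℤ) (d r : ℕ) : x * Hq x c d r = Hq x c d r * x :=
  calc x * Hq x c d r
      = Polynomial.aeval x X * Polynomial.aeval x (Hq (X : Polynomial 𝕂) c d r) := by
        rw [Polynomial.aeval_X, aeval_Hq]
    _ = Polynomial.aeval x (X * Hq (X : Polynomial 𝕂) c d r) := (map_mul _ _ _).symm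
    _ = Polynomial.aeval x (Hq (X : Polynomial 𝕂) c d r * X) := by rw [mul_comm]
    _ = Hq x c d r * x := by rw [map_mul, Polynomial.aeval_X, aeval_Hq]

lemma star2A (x : A) (t : ℤ) (d r : ℕ) :
    ((q : 𝕂) ^ d * (q ^ (d + r + 1) - 1)) • Hq x t (d + 1) r =
      ((q ^ (t + 2 * (r : ℤ)) : 𝕂) • x - (q ^ (d + r) : 𝕂) • 1) * Hq x t d r
        + ((q : 𝕂) ^ d * (q ^ (2 * r) - 1)) • Hq x t (d + 1) (r - 1) := by
  have h := congrArg (Polynomial.aeval x) (star2 t d r)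
  simpa only [map_smul, map_add, map_mul, map_sub, map_one, aeval_Hq, Polynomial.aeval_X] using h

end Transport

section WLemmas

variable {A : Type*} [Ring A] [Algebra 𝕂 A]

lemma qIntFac_zero : qIntFac 0 = 1 := rfl

lemma qDiv_zero (w : A) : qDiv w 0 = 1 := by
  simp [qDiv, qIntFac_zero]

variable {x w : A} (hwx : w * x = (q ^ 2 : 𝕂) • (x * w))

include hwx in
lemma w_pow_x (r : ℕ) : w ^ r * x = (q ^ (2 * r) : 𝕂) • (x * w ^ r) := by
  induction r with
  | zero => simp
  | succ r ih =>
    rw [pow_succ, mul_assoc, hwx, mul_smul_comm, ← mul_assoc, ih, smul_mul_assoc, smul_smul,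
      mul_assoc, ← pow_succ, ← pow_add]
    congr 2
    ring

include hwx in
lemma qDiv_x (r : ℕ) : qDiv w r * x = (q ^ (2 * r) : 𝕂) • (x * qDiv w r) := by
  unfold qDiv
  rw [smul_mul_assoc, w_pow_x hwx, smul_comm, mul_smul_comm]

lemma qDiv_w (r : ℕ) : qDiv w r * w = qInt (r + 1) • qDiv w (r + 1) := by
  unfold qDiv
  rw [smul_mul_assoc, ← pow_succ, smul_smul]
  congr 1
  rw [qIntFac_succ, mul_inv, ← mul_assoc, mul_comm (qInt (r+1)), mul_assoc,
    mul_inv_cancel₀ (qInt_succ_ne r), mul_one]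

include hwx in
lemma mul_expand (r : ℕ) (B : A) (hB : x * B = B * x) (α lc : 𝕂) :
    (B * qDiv w r) * (α • (x + lc • w) - 1)
      = (α * q ^ (2 * r)) • ((x * B) * qDiv w r) - B * qDiv w r
        + (α * lc * qInt (r + 1)) • (B * qDiv w (r + 1)) := by
  rw [mul_sub, mul_one, smul_add, mul_add, mul_smul_comm, mul_smul_comm, mul_smul_comm,
    mul_assoc, mul_assoc, qDiv_x hwx, qDiv_w]
  simp only [mul_smul_comm, smul_smul, ← mul_assoc B x]
  rw [← hB, ← mul_assoc α lc]
  abel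

end WLemmas
section KeyLemmas

variable {A : Type*} [Ring A] [Algebra 𝕂 A]

/-- canonical coefficient -/
def cf (t : ℤ) (m r : ℕ) : 𝕂 := (q ^ (t - (m : ℤ))) ^ r * (q - q⁻¹) ^ r

lemma cf_eq (t : ℤ) (m r : ℕ) :
    (q ^ ((r : ℤ) * (t - (m : ℤ))) * (q - q⁻¹) ^ r : 𝕂) = cf t m r := by
  unfold cf
  rw [mul_comm ((r : ℤ)) _, zpow_mul, zpow_natCast]

def SAq (k : ℕ) : 𝕂 := ∑ s ∈ range (k + 1), (q ^ ((s + 1).choose 2) * qNumBinom k s)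

lemma Hq_d_zero (x : A) (c : ℤ) (k : ℕ) : Hq x c 0 k = SAq k • (1 : A) := by
  unfold Hq SAq
  rw [Finset.sum_smul]
  exact Finset.sum_congr rfl fun s _ => by rw [qBin_zero]

lemma SAq_succ (k : ℕ) : SAq (k + 1) = (1 + q ^ (k + 1)) * SAq k := by
  have h := a_rec (M := 𝕂) (fun _ => (1 : 𝕂)) k
  unfold SAq
  simp only [smul_eq_mul, mul_one] at h
  rw [h, ← Finset.mul_sum]
  ring

lemma zbase_succ (t : ℤ) (m : ℕ) :
    (q : 𝕂) ^ (t - ((m + 1 : ℕ) : ℤ)) = q ^ (t - (m : ℤ)) * q⁻¹ := by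
  rw [show t - ((m + 1 : ℕ) : ℤ) = (t - (m : ℤ)) + (-1) by push_cast; ring,
    zpow_add₀ q_ne_zero, zpow_neg_one]

lemma zbase_ne (t : ℤ) (m : ℕ) : (q : 𝕂) ^ (t - (m : ℤ)) ≠ 0 := zpow_ne_zero _ q_ne_zero

lemma keyA0 (x w : A) (t : ℤ) (m : ℕ) :
    ((q ^ (m + 1) - 1) * cf t (m + 1) 0) • (qBrace x t (m + 1) 0 * qDiv w 0) =
      cf t m 0 • (((q ^ (t - (m : ℤ)) * q ^ (2 * 0) : 𝕂) • (x * qBrace x t m 0)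
        - qBrace x t m 0) * qDiv w 0) := by
  simp only [qBrace_eq_Hq, Nat.sub_zero, Hq_zero]
  have hcomm : x * qBin x t m = qBin x t m * x := by
    rw [← Hq_zero x t m, x_commute_Hq, Hq_zero]
  have S := qBin_succ_right x t m
  unfold cf
  simp only [pow_zero, mul_one, mul_zero, one_smul]
  rw [← smul_mul_assoc, S, mul_sub, mul_one, mul_smul_comm, ← hcomm]

lemma keyA1 (x w : A) (t : ℤ) (d r' : ℕ) :
    ((q ^ (d + r' + 1 + 1) - 1) * cf t (d + r' + 1 + 1) (r' + 1)) •
        (Hq x t (d + 1) (r' + 1) * qDiv w (r' + 1)) =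
      cf t (d + r' + 1) (r' + 1) •
        (((q ^ (t - ((d + r' + 1 : ℕ) : ℤ)) * q ^ (2 * (r' + 1)) : 𝕂) •
            (x * Hq x t d (r' + 1)) - Hq x t d (r' + 1)) * qDiv w (r' + 1))
        + (cf t (d + r' + 1) r' * (q ^ (t - ((d + r' + 1 : ℕ) : ℤ)) *
            ((q - q⁻¹) ^ 2 * qInt (r' + 1)))) • (Hq x t (d + 1) r' * qDiv w (r' + 1)) := by
  refine smul_cancel (pow_ne_zero (d + r' + 1) q_ne_zero) ?_
  have S := star2A x t d (r' + 1)
  rw [show (r' + 1) - 1 = r' from rfl] at S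
  have S' := congrArg (· * qDiv w (r' + 1)) S
  simp only [add_mul, smul_mul_assoc, sub_mul, one_mul, smul_sub] at S'
  have hz3 : (q : 𝕂) ^ (t + 2 * (((r' + 1) : ℕ) : ℤ)) =
      q ^ (t - ((d + r' + 1 : ℕ) : ℤ)) * q ^ (d + 3 * r' + 3) := by
    rw [show t + 2 * (((r' + 1) : ℕ) : ℤ) = (t - ((d + r' + 1 : ℕ) : ℤ)) + ((d + 3 * r' + 3 : ℕ) : ℤ)
      by push_cast; ring, zpow_add₀ q_ne_zero, zpow_natCast]
  rw [hz3] at S'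
  have hcoef : (q : 𝕂) ^ (d + r' + 1) * ((q ^ (d + r' + 1 + 1) - 1) * cf t (d + r' + 1 + 1) (r' + 1))
      = ((q ^ (t - ((d + r' + 1 : ℕ) : ℤ))) ^ (r' + 1) * (q - q⁻¹) ^ (r' + 1)) *
          (q ^ d * (q ^ (d + (r' + 1) + 1) - 1)) := by
    unfold cf
    rw [zbase_succ t (d + r' + 1)]
    have hv : (q : 𝕂) ^ (r' + 1) * (q ^ (r' + 1))⁻¹ = 1 :=
      mul_inv_cancel₀ (pow_ne_zero _ q_ne_zero)
    linear_combination ((q ^ (t - ((d + r' + 1 : ℕ) : ℤ))) ^ (r' + 1) * (q - q⁻¹) ^ (r' + 1)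
      * q ^ d * (q ^ (d + r' + 1 + 1) - 1) : 𝕂) * hv
  rw [smul_smul, hcoef, mul_smul, S']
  unfold cf
  simp only [smul_add, smul_sub, smul_smul, sub_mul, smul_mul_assoc, one_mul]
  have hv : (q : 𝕂) ^ (r' + 1) * (q ^ (r' + 1))⁻¹ = 1 :=
    mul_inv_cancel₀ (pow_ne_zero _ q_ne_zero)
  congr 1
  · congr 1
    · congr 1
      ring
    · congr 1
      ring
  · congr 1
    rw [sq, mul_assoc ((q : 𝕂) - q⁻¹), qInt_mul r', inv_pow]
    linear_combination ((q ^ (t - ((d + r' + 1 : ℕ) : ℤ))) ^ (r' + 1) * (q - q⁻¹) ^ (r' + 1)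
      * q ^ d : 𝕂) * hv

lemma keyB (x w : A) (t : ℤ) (m : ℕ) :
    ((q ^ (m + 1) - 1) * cf t (m + 1) (m + 1)) • (Hq x t 0 (m + 1) * qDiv w (m + 1)) =
      (cf t m m * (q ^ (t - (m : ℤ)) * ((q - q⁻¹) ^ 2 * qInt (m + 1)))) •
        (Hq x t 0 m * qDiv w (m + 1)) := by
  rw [Hq_d_zero, Hq_d_zero, SAq_succ]
  simp only [smul_mul_assoc, one_mul, smul_smul]
  congr 1
  unfold cf
  rw [zbase_succ t m, mul_pow, inv_pow, sq, mul_assoc ((q : 𝕂) - q⁻¹), qInt_mul m, inv_pow]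
  have hv : (q : 𝕂) ^ (m + 1) * (q ^ (m + 1))⁻¹ = 1 :=
    mul_inv_cancel₀ (pow_ne_zero _ q_ne_zero)
  linear_combination ((q ^ (t - (m : ℤ))) ^ (m + 1) * (q - q⁻¹) ^ (m + 1) * SAq m
    * q ^ (m + 1) : 𝕂) * hv

end KeyLemmas
/-- **Lemma 1.6 (c-1)**. -/
theorem lemma_1_6_c1 {A : Type*} [Ring A] [Algebra 𝕂 A]
    (x w : A) (hwx : w * x = (q ^ 2 : 𝕂) • (x * w)) (m : ℕ) (t : ℤ) :
    qBin (x + ((q - q⁻¹) ^ 2 : 𝕂) • w) t m =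
      ∑ r ∈ range (m + 1),
        (q ^ ((r : ℤ) * (t - (m : ℤ))) * (q - q⁻¹) ^ r : 𝕂) •
          (qBrace x t m r * qDiv w r) := by
  induction m with
  | zero =>
    rw [Finset.sum_range_one, qBin_zero]
    simp [qBrace_eq_Hq, Hq_zero, qBin_zero, qDiv_zero]
  | succ m IH =>
    refine smul_cancel (q_pow_sub_one_ne m) ?_
    rw [qBin_succ_right (x + ((q - q⁻¹) ^ 2 : 𝕂) • w) t m, IH]
    simp only [cf_eq]
    rw [Finset.sum_mul, Finset.smul_sum]
    simp only [smul_smul]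
    have hexp : ∀ r ∈ range (m + 1),
        (cf t m r • (qBrace x t m r * qDiv w r)) *
            ((q ^ (t - (m : ℤ)) : 𝕂) • (x + ((q - q⁻¹) ^ 2 : 𝕂) • w) - 1)
          = cf t m r • (((q ^ (t - (m : ℤ)) * q ^ (2 * r) : 𝕂) • (x * qBrace x t m r)
                - qBrace x t m r) * qDiv w r)
            + (cf t m r * (q ^ (t - (m : ℤ)) * ((q - q⁻¹) ^ 2 * qInt (r + 1)))) •
                (qBrace x t m r * qDiv w (r + 1)) := by
      intro r _
      have hB : x * qBrace x t m r = qBrace x t m r * x := by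
        rw [qBrace_eq_Hq, x_commute_Hq]
      rw [smul_mul_assoc, mul_expand hwx r _ hB, smul_add]
      congr 1
      · congr 1
        rw [sub_mul, smul_mul_assoc]
      · rw [smul_smul]
        congr 1
        ring
    rw [Finset.sum_congr rfl hexp, Finset.sum_add_distrib]
    rw [Finset.sum_range_succ'
      (fun r => ((q ^ (m + 1) - 1) * cf t (m + 1) r) • (qBrace x t (m + 1) r * qDiv w r)) (m + 1)]
    rw [Finset.sum_range_succ
      (fun r => ((q ^ (m + 1) - 1) * cf t (m + 1) (r + 1)) •
        (qBrace x t (m + 1) (r + 1) * qDiv w (r + 1))) m]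
    have h0 : ((q ^ (m + 1) - 1) * cf t (m + 1) 0) • (qBrace x t (m + 1) 0 * qDiv w 0)
        = cf t m 0 • (((q ^ (t - (m : ℤ)) * q ^ (2 * 0) : 𝕂) • (x * qBrace x t m 0)
            - qBrace x t m 0) * qDiv w 0) := keyA0 x w t m
    have htop : ((q ^ (m + 1) - 1) * cf t (m + 1) (m + 1)) •
          (qBrace x t (m + 1) (m + 1) * qDiv w (m + 1))
        = (cf t m m * (q ^ (t - (m : ℤ)) * ((q - q⁻¹) ^ 2 * qInt (m + 1)))) •
            (qBrace x t m m * qDiv w (m + 1)) := by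
      have h := keyB x w t m
      rw [qBrace_eq_Hq, qBrace_eq_Hq, Nat.sub_self, Nat.sub_self]
      exact h
    have hmid : ∀ r ∈ range m,
        ((q ^ (m + 1) - 1) * cf t (m + 1) (r + 1)) •
            (qBrace x t (m + 1) (r + 1) * qDiv w (r + 1))
          = cf t m (r + 1) • (((q ^ (t - (m : ℤ)) * q ^ (2 * (r + 1)) : 𝕂) •
                (x * qBrace x t m (r + 1)) - qBrace x t m (r + 1)) * qDiv w (r + 1))
            + (cf t m r * (q ^ (t - (m : ℤ)) * ((q - q⁻¹) ^ 2 * qInt (r + 1)))) •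
                (qBrace x t m r * qDiv w (r + 1)) := by
      intro r hr
      have hrm : r < m := Finset.mem_range.1 hr
      obtain ⟨d, hd⟩ : ∃ d, m = d + r + 1 := ⟨m - r - 1, by omega⟩
      subst hd
      rw [qBrace_eq_Hq, qBrace_eq_Hq, qBrace_eq_Hq,
        show d + r + 1 + 1 - (r + 1) = d + 1 by omega,
        show d + r + 1 - (r + 1) = d by omega,
        show d + r + 1 - r = d + 1 by omega]
      exact keyA1 x w t d r
    rw [htop, h0, Finset.sum_congr rfl hmid, Finset.sum_add_distrib]
    rw [Finset.sum_range_succ'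
      (fun r => cf t m r • (((q ^ (t - (m : ℤ)) * q ^ (2 * r) : 𝕂) • (x * qBrace x t m r)
        - qBrace x t m r) * qDiv w r)) m]
    rw [Finset.sum_range_succ
      (fun r => (cf t m r * (q ^ (t - (m : ℤ)) * ((q - q⁻¹) ^ 2 * qInt (r + 1)))) •
        (qBrace x t m r * qDiv w (r + 1))) m]
    abel

end
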